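/- Let p, q be coprime with 0 < p < q, let t_{p/q} = ∑_{i=1}^q s_i 2^{-i} with s_i = ⌊(i+1)p/q⌋ - ⌊i p/q⌋, and let t⁻ = (2^q t_{p/q} - 1)/(2^q - 1) and t⁺ = 2^q t_{p/q}/(2^q - 1) be the endpoints of I_{p/q}. Then ∑_{i=0}^{q-1} {2^i t⁻} = ∑_{i=0}^{q-1} {2^i t⁺}, where {x} denotes the fractional part. -/

import Mathlib

open Finset

lemma floor_nat_div_real (n d : ℕ) : ⌊((n:ℝ))/(d:ℝ)⌋ = ((n / d : ℕ) : ℤ) := by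
  have h : ((n:ℝ)/(d:ℝ)) = (Rat.cast ((n : ℚ)/(d:ℚ)) : ℝ) := by push_cast; ring
  rw [h, Rat.floor_cast, Rat.floor_natCast_div_natCast]
  exact (Int.natCast_ediv n d).symm

lemma sum_two_pow (q : ℕ) : ∑ k ∈ range q, 2^k = 2^q - 1 := by
  induction q with
  | zero => simp
  | succ n ih => rw [Finset.sum_range_succ, ih]; have := Nat.one_le_two_pow (n := n); rw [pow_succ]; omega

lemma sum_bits (q : ℕ) : ∀ m, m < 2^q → ∑ j ∈ range q, (m / 2^j % 2) * 2^j = m := by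
  induction q with
  | zero => intro m hm; interval_cases m; simp
  | succ n ih =>
    intro m hm
    rw [Finset.sum_range_succ']
    have h1 : ∀ j, m / 2^(j+1) = (m/2)/2^j := by
      intro j; rw [pow_succ, Nat.mul_comm, ← Nat.div_div_eq_div_mul]
    have h2 : ∑ j ∈ range n, (m / 2^(j+1) % 2) * 2^(j+1)
        = 2 * ∑ j ∈ range n, ((m/2) / 2^j % 2) * 2^j := by
      rw [Finset.mul_sum]; apply Finset.sum_congr rfl; intro j _
      rw [h1 j, pow_succ]; ring
    rw [h2, ih (m/2) (by omega)]
    omega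

lemma sum_shift_mod (q : ℕ) (hq : 0 < q) (g : ℕ → ℕ) (i : ℕ) :
    ∑ j ∈ range q, g ((i + j) % q) = ∑ j ∈ range q, g j := by
  induction i with
  | zero => apply Finset.sum_congr rfl; intro j hj; rw [Nat.zero_add, Nat.mod_eq_of_lt (mem_range.mp hj)]
  | succ i ih =>
    obtain ⟨k, rfl⟩ : ∃ k, q = k + 1 := ⟨q-1, by omega⟩
    rw [← ih, Finset.sum_range_succ, Finset.sum_range_succ' (fun j => g ((i + j) % (k+1)))]
    congr 1
    · apply Finset.sum_congr rfl; intro j _; congr 2; omega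
    · have h3 : i + 1 + k = i + (k+1) := by omega
      rw [h3, Nat.add_mod_right]; norm_num

lemma pow_modEq (q a : ℕ) (hq : 0 < q) : 2^a ≡ 2^(a % q) [MOD 2^q - 1] := by
  conv_lhs => rw [← Nat.div_add_mod a q]
  rw [pow_add, pow_mul]
  have h1 : (2:ℕ)^q ≡ 1 [MOD 2^q - 1] :=
    ((Nat.modEq_iff_dvd' Nat.one_le_two_pow).mpr dvd_rfl).symm
  simpa using (h1.pow (a / q)).mul_right (2^(a % q))

lemma rot (q i m : ℕ) (hq : 0 < q) (hm : m < 2^q - 1) :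
    (2^i * m) % (2^q - 1) = ∑ j ∈ range q, (m / 2^j % 2) * 2^((i+j) % q) := by
  have hq1 : 1 ≤ 2^q := Nat.one_le_two_pow
  have hm2 : m < 2^q := by omega
  have hbits := sum_bits q m hm2
  have hex : ∃ j ∈ range q, (m / 2^j % 2) * 2^((i+j) % q) < 2^((i+j) % q) := by
    by_contra hno
    push_neg at hno
    have hall : ∀ j ∈ range q, m / 2^j % 2 = 1 := by
      intro j hj
      have h := hno j hj
      have hp : 0 < 2^((i+j) % q) := Nat.two_pow_pos _
      have hb : m / 2^j % 2 = 0 ∨ m / 2^j % 2 = 1 := by omega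
      rcases hb with hb | hb
      · rw [hb, zero_mul] at h; omega
      · exact hb
    have hM : m = 2^q - 1 := by
      rw [← hbits, ← sum_two_pow q]
      apply Finset.sum_congr rfl
      intro j hj; rw [hall j hj, one_mul]
    omega
  have hlt : ∑ j ∈ range q, (m / 2^j % 2) * 2^((i+j) % q) < 2^q - 1 := by
    calc ∑ j ∈ range q, (m / 2^j % 2) * 2^((i+j) % q)
        < ∑ j ∈ range q, 2^((i+j) % q) := by
          apply Finset.sum_lt_sum _ hex
          intro j hj
          have hb : m / 2^j % 2 ≤ 1 := by omega
          calc (m / 2^j % 2) * 2^((i+j) % q) ≤ 1 * 2^((i+j) % q) :=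
                mul_le_mul_left hb _
            _ = 2^((i+j) % q) := one_mul _
      _ = ∑ j ∈ range q, 2^j := sum_shift_mod q hq (fun k => 2^k) i
      _ = 2^q - 1 := sum_two_pow q
  have hcong : (2^i * m) % (2^q - 1)
      = (∑ j ∈ range q, (m / 2^j % 2) * 2^((i+j) % q)) % (2^q - 1) := by
    conv_lhs => rw [← hbits]
    rw [Finset.mul_sum, Finset.sum_nat_mod,
      Finset.sum_nat_mod (range q) (2^q - 1) (fun j => (m / 2^j % 2) * 2^((i+j) % q))]
    congr 1
    apply Finset.sum_congr rfl
    intro j _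
    have h1 : 2^i * (m / 2^j % 2 * 2^j) = (m / 2^j % 2) * 2^(i+j) := by
      rw [pow_add]; ring
    rw [h1]
    exact (pow_modEq q (i+j) hq).mul_left _
  rw [hcong, Nat.mod_eq_of_lt hlt]

lemma sum_rot (q m : ℕ) (hq : 0 < q) (hm : m < 2^q - 1) :
    ∑ i ∈ range q, (2^i * m % (2^q - 1)) = (2^q - 1) * ∑ j ∈ range q, (m / 2^j % 2) := by
  calc ∑ i ∈ range q, (2^i * m % (2^q - 1))
      = ∑ i ∈ range q, ∑ j ∈ range q, (m / 2^j % 2) * 2^((i+j) % q) :=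
        Finset.sum_congr rfl (fun i _ => rot q i m hq hm)
    _ = ∑ j ∈ range q, ∑ i ∈ range q, (m / 2^j % 2) * 2^((i+j) % q) := Finset.sum_comm
    _ = ∑ j ∈ range q, (m / 2^j % 2) * (2^q - 1) := by
        apply Finset.sum_congr rfl
        intro j _
        rw [← Finset.mul_sum]
        congr 1
        calc ∑ i ∈ range q, 2^((i+j) % q)
            = ∑ i ∈ range q, 2^((j+i) % q) := by
              apply Finset.sum_congr rfl; intro i _; rw [Nat.add_comm]
          _ = ∑ i ∈ range q, 2^i := sum_shift_mod q hq (fun k => 2^k) j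
          _ = 2^q - 1 := sum_two_pow q
    _ = (2^q - 1) * ∑ j ∈ range q, (m / 2^j % 2) := by
        rw [Finset.mul_sum]
        apply Finset.sum_congr rfl; intro j _; ring

lemma sum_split2 (k : ℕ) (f : ℕ → ℕ) :
    ∑ j ∈ range (k+2), f j = (∑ j ∈ range k, f (j+2)) + f 1 + f 0 := by
  rw [Finset.sum_range_succ', Finset.sum_range_succ' (fun j => f (j+1))]

lemma div4_pow (m a j : ℕ) (h4 : m / 4 = a) : m / 2^(j+2) % 2 = a / 2^j % 2 := by
  have h : (2:ℕ)^(j+2) = 4 * 2^j := by rw [pow_add]; ring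
  rw [h, ← Nat.div_div_eq_div_mul, h4]

lemma popcount_eq (q a : ℕ) (hq : 2 ≤ q) :
    ∑ j ∈ range q, ((4*a+1) / 2^j % 2) = ∑ j ∈ range q, ((4*a+2) / 2^j % 2) := by
  obtain ⟨k, rfl⟩ : ∃ k, q = k + 2 := ⟨q - 2, by omega⟩
  rw [sum_split2, sum_split2]
  have e1 : ∀ j, (4*a+1) / 2^(j+2) % 2 = a / 2^j % 2 := fun j => div4_pow _ a j (by omega)
  have e2 : ∀ j, (4*a+2) / 2^(j+2) % 2 = a / 2^j % 2 := fun j => div4_pow _ a j (by omega)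
  rw [Finset.sum_congr rfl (fun j _ => e1 j), Finset.sum_congr rfl (fun j _ => e2 j)]
  have h1 : (4*a+1) / 2^1 % 2 = 0 := by omega
  have h2 : (4*a+2) / 2^1 % 2 = 1 := by omega
  have h3 : (4*a+1) / 2^0 % 2 = 1 := by omega
  have h4 : (4*a+2) / 2^0 % 2 = 0 := by omega
  omega

lemma fract_sum (q m : ℕ) (hq : 0 < q) (hm : m < 2^q - 1) :
    ∑ i ∈ range q, Int.fract ((2:ℝ)^i * ((m : ℝ) / ((2^q - 1 : ℕ) : ℝ)))
      = ((∑ j ∈ range q, (m / 2^j % 2) : ℕ) : ℝ) := by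
  have hMn : 0 < 2^q - 1 := by have : 2 ≤ 2^q := by calc 2 = 2^1 := rfl
                                                      _ ≤ 2^q := Nat.pow_le_pow_right (by norm_num) hq
                               omega
  have hM : (0:ℝ) < ((2^q - 1 : ℕ):ℝ) := by exact_mod_cast hMn
  calc ∑ i ∈ range q, Int.fract ((2:ℝ)^i * ((m : ℝ) / ((2^q - 1 : ℕ) : ℝ)))
      = ∑ i ∈ range q, ((2^i * m % (2^q-1) : ℕ):ℝ)/((2^q-1:ℕ):ℝ) := by
        apply Finset.sum_congr rfl
        intro i _
        rw [show (2:ℝ)^i * ((m:ℝ)/((2^q-1:ℕ):ℝ)) = ((2^i*m : ℕ):ℝ)/((2^q-1:ℕ):ℝ) by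
          push_cast; ring]
        rw [Int.fract_div_natCast_eq_div_natCast_mod]
    _ = ((∑ i ∈ range q, (2^i * m % (2^q-1)) : ℕ):ℝ)/((2^q-1:ℕ):ℝ) := by
        rw [← Finset.sum_div]; norm_num
    _ = ((∑ j ∈ range q, (m / 2^j % 2) : ℕ) : ℝ) := by
        rw [sum_rot q m hq hm]
        push_cast
        rw [mul_div_cancel_left₀ _ (ne_of_gt hM)]

def dd (p q i : ℕ) : ℕ := ((i+1)*p)/q - (i*p)/q

lemma dd_le (p q i : ℕ) (hq : p < q) : dd p q i ≤ 1 := by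
  unfold dd
  have h3 : (i+1)*p = i*p + p := by ring
  have h4 : ((i+1)*p)/q ≤ (i*p)/q + 1 := by
    calc ((i+1)*p)/q = (i*p + p)/q := by rw [h3]
      _ ≤ (i*p + q)/q := Nat.div_le_div_right (by omega)
      _ = i*p/q + 1 := Nat.add_div_right _ (by omega)
  omega

lemma dd_q (p q : ℕ) (hp : 0 < p) (hq : p < q) : dd p q q = 0 := by
  unfold dd
  have h1 : (q+1)*p = p + q*p := by ring
  rw [h1, Nat.add_mul_div_left _ _ (by omega : 0 < q),
    Nat.mul_div_cancel_left _ (by omega : 0 < q), Nat.div_eq_of_lt hq]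
  omega

lemma dd_q1 (p q : ℕ) (hp : 0 < p) (hq : p < q) : dd p q (q-1) = 1 := by
  unfold dd
  have h0 : q - 1 + 1 = q := by omega
  rw [h0, Nat.mul_div_cancel_left _ (by omega : 0 < q)]
  have h2 : ((q-1)*p)/q = p - 1 := by
    apply Nat.div_eq_of_lt_le
    · calc (p-1)*q = p*q - 1*q := Nat.sub_mul p 1 q
        _ = q*p - q := by rw [Nat.mul_comm, Nat.one_mul]
        _ ≤ q*p - p := Nat.sub_le_sub_left (by omega) _
        _ = (q-1)*p := by rw [Nat.sub_mul, Nat.one_mul]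
    · have hlt : (q-1)*p < q*p := by
        exact (Nat.mul_lt_mul_right hp).mpr (by omega)
      calc (q-1)*p < q*p := hlt
        _ = (p-1+1)*q := by rw [Nat.mul_comm]; congr 1; omega
  rw [h2]
  omega

noncomputable def tpq (p q : ℕ) : ℝ :=
  ∑ i ∈ Finset.Icc 1 q,
    ((⌊(((i + 1) * p : ℕ) : ℝ) / q⌋ - ⌊((i * p : ℕ) : ℝ) / q⌋ : ℤ) : ℝ) / 2 ^ i

theorem stmt_5 (p q : ℕ) (hpq : Nat.Coprime p q) (hp : 0 < p) (hq : p < q) :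
    ∑ i ∈ Finset.range q, Int.fract ((2 : ℝ) ^ i * ((2 ^ q * tpq p q - 1) / (2 ^ q - 1)))
      = ∑ i ∈ Finset.range q, Int.fract ((2 : ℝ) ^ i * (2 ^ q * tpq p q / (2 ^ q - 1))) := by
  have htpq : tpq p q = ∑ i ∈ Finset.Icc 1 q, (dd p q i : ℝ)/2^i := by
    unfold tpq dd
    apply Finset.sum_congr rfl
    intro i _
    have hle : (i*p)/q ≤ ((i+1)*p)/q :=
      Nat.div_le_div_right (Nat.mul_le_mul_right p (by omega))
    rw [floor_nat_div_real, floor_nat_div_real, Nat.cast_sub hle]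
    simp only [Int.cast_sub, Int.cast_natCast]
  obtain ⟨k, rfl⟩ : ∃ k, q = k + 2 := ⟨q-2, by omega⟩
  set N : ℕ := ∑ j ∈ range (k+2), dd p (k+2) (k+2-j) * 2^j with hN
  have hNval : 2^(k+2) * tpq p (k+2) = (N:ℝ) := by
    rw [htpq, Finset.mul_sum, hN]
    push_cast
    rw [eq_comm]
    apply Finset.sum_nbij' (i := fun i => k+2-i) (j := fun j => k+2-j)
    · intro a ha; simp only [Finset.mem_range, Finset.mem_Icc] at ha ⊢; omega
    · intro a ha; simp only [Finset.mem_range, Finset.mem_Icc] at ha ⊢; omega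
    · intro a ha; simp only [Finset.mem_range, Finset.mem_Icc] at ha ⊢; omega
    · intro a ha; simp only [Finset.mem_range, Finset.mem_Icc] at ha ⊢; omega
    · intro a ha
      simp only [Finset.mem_range] at ha
      have hpow : (2:ℝ)^(k+2-a) * 2^a = 2^(k+2) := by
        rw [← pow_add]; congr 1; omega
      have hnz : (2:ℝ)^a ≠ 0 := pow_ne_zero _ two_ne_zero
      have hnz2 : (2:ℝ)^(k+2-a) ≠ 0 := pow_ne_zero _ two_ne_zero
      rw [← hpow]
      field_simp
  set A : ℕ := ∑ j ∈ range k, dd p (k+2) (k+2-(j+2)) * 2^j with hA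
  have hN4 : N = 4*A + 2 := by
    rw [hN, sum_split2, hA]
    have h0 : dd p (k+2) (k+2-0) * 2^0 = 0 := by
      simp [Nat.sub_zero, dd_q p (k+2) hp hq]
    have h1 : dd p (k+2) (k+2-1) * 2^1 = 2 := by
      have : k+2-1 = (k+2)-1 := rfl
      rw [this, dd_q1 p (k+2) hp hq]
      norm_num
    have h2 : ∑ j ∈ range k, dd p (k+2) (k+2-(j+2)) * 2^(j+2)
        = 4 * ∑ j ∈ range k, dd p (k+2) (k+2-(j+2)) * 2^j := by
      rw [Finset.mul_sum]
      apply Finset.sum_congr rfl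
      intro j _
      rw [pow_add]
      ring
    rw [h0, h1, h2]
  have hAlt : A < 2^k := by
    have h1 : A ≤ ∑ j ∈ range k, 1 * 2^j :=
      Finset.sum_le_sum (fun j _ => mul_le_mul_left (dd_le p (k+2) _ hq) _)
    have h2 : ∑ j ∈ range k, 1 * 2^j = 2^k - 1 := by
      simp only [one_mul]; exact sum_two_pow k
    have h3 : (1:ℕ) ≤ 2^k := Nat.one_le_two_pow
    omega
  have hNlt : N < 2^(k+2) - 1 := by
    have h4 : (2:ℕ)^(k+2) = 4 * 2^k := by rw [pow_add]; ring
    omega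
  have hcast : ((2^(k+2) - 1 : ℕ):ℝ) = (2:ℝ)^(k+2) - 1 := by
    rw [Nat.cast_sub Nat.one_le_two_pow]
    push_cast
    ring
  have ht1 : (2^(k+2) * tpq p (k+2) - 1) / ((2:ℝ)^(k+2) - 1)
      = ((4*A+1 : ℕ):ℝ)/((2^(k+2)-1 : ℕ):ℝ) := by
    rw [hNval, hcast, hN4]; push_cast; ring
  have ht2 : 2^(k+2) * tpq p (k+2) / ((2:ℝ)^(k+2) - 1)
      = ((4*A+2 : ℕ):ℝ)/((2^(k+2)-1:ℕ):ℝ) := by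
    rw [hNval, hcast, hN4]
  rw [show ((2:ℝ)^(k+2) - 1) = ((2:ℝ)^(k+2) - 1) from rfl]
  simp only [ht1, ht2]
  rw [fract_sum (k+2) (4*A+1) (by omega) (by omega),
    fract_sum (k+2) (4*A+2) (by omega) (by omega)]
  exact_mod_cast popcount_eq (k+2) A (by omega)
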